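/- Let C ⊆ ℝⁿ be a nonempty, closed and convex set, let x₀ ∈ C, and let σ > 0 and λ ≥ 0 with τ = σλ. Let v ~ N(0, I_n), z = σv, and let x* be the unique minimizer over x ∈ C of τ f(x) + (1/2)‖(x₀+z) − x‖₂², for a convex function f : ℝⁿ → ℝ. Then: (i) E[‖x* − x₀‖₂²]/σ² ≤ D(λ∂f(x₀) + T_C(x₀)*); (ii) choosing λ* = argmin_{λ≥0} D(λ∂f(x₀) + T_C(x₀)*) and τ = λ*σ yields E[‖x* − x₀‖₂²]/σ² ≤ min_{λ≥0} D(λ∂f(x₀) + T_C(x₀)*). -/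

import Mathlib

open MeasureTheory ProbabilityTheory Filter Topology Metric
open scoped RealInnerProductSpace ENNReal Pointwise Matrix

noncomputable section

/-- Standard Gaussian measure on `ℝⁿ` (mean zero, identity covariance). -/
def stdGaussian (n : ℕ) : Measure (EuclideanSpace ℝ (Fin n)) :=
  Measure.map (⇑(EuclideanSpace.equiv (Fin n) ℝ).symm)
    (Measure.pi fun _ : Fin n => gaussianReal 0 1)

/-- `D(K)`: mean squared distance of a standard Gaussian vector to `K`. -/
def msd (n : ℕ) (K : Set (EuclideanSpace ℝ (Fin n))) : ℝ :=
  ∫ g, (Metric.infDist g K) ^ 2 ∂(stdGaussian n)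

variable {E : Type*} [NormedAddCommGroup E] [InnerProductSpace ℝ E]

/-- Subdifferential of `f` at `x₀`. -/
def subdiff (f : E → ℝ) (x₀ : E) : Set E :=
  {s | ∀ x, f x₀ + ⟪s, x - x₀⟫ ≤ f x}

/-- Cone generated by a set: `{c • x : c ≥ 0, x ∈ A}`. -/
def coneOf (A : Set E) : Set E :=
  {y | ∃ c : ℝ, 0 ≤ c ∧ ∃ x ∈ A, y = c • x}

/-- Set of feasible directions of `C` at `x₀`. -/
def feasible (C : Set E) (x₀ : E) : Set E := {z | x₀ + z ∈ C}

/-- Tangent cone of `C` at `x₀`: the closure of the cone of feasible directions. -/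
def tangentConeOf (C : Set E) (x₀ : E) : Set E := closure (coneOf (feasible C x₀))

/-- Polar cone of a set `K`. -/
def polarCone (K : Set E) : Set E := {v | ∀ x ∈ K, ⟪v, x⟫ ≤ 0}

open Classical in
/-- Metric projection onto `K` (the unique nearest point when `K` is nonempty,
closed and convex). -/
def projSet (K : Set E) (x : E) : E :=
  if h : ∃ y ∈ K, dist x y = Metric.infDist x K then h.choose else x

/-- Matrix-vector multiplication as a map between Euclidean spaces. -/
def matVec {m n : ℕ} (A : Matrix (Fin m) (Fin n) ℝ) (x : EuclideanSpace ℝ (Fin n)) :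
    EuclideanSpace ℝ (Fin m) :=
  (EuclideanSpace.equiv (Fin m) ℝ).symm (A.mulVec (EuclideanSpace.equiv (Fin n) ℝ x))

/-- Statistical dimension of `K`: `E ‖Proj(g,K)‖²` for standard Gaussian `g`. -/
def statDim (n : ℕ) (K : Set (EuclideanSpace ℝ (Fin n))) : ℝ :=
  ∫ g, ‖projSet K g‖ ^ 2 ∂(stdGaussian n)

end

/-- Borel/product measurable structure on real matrices. -/
instance matrixMeasurableSpace {m n : ℕ} : MeasurableSpace (Matrix (Fin m) (Fin n) ℝ) :=
  (inferInstance : MeasurableSpace (Fin m → Fin n → ℝ))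


section AuxLemmas

open Real

variable {E : Type*} [NormedAddCommGroup E] [InnerProductSpace ℝ E]

lemma norm_combo (p q : E) (θ : ℝ) :
    ‖(1 - θ) • p + θ • q‖ ^ 2
      = (1 - θ) * ‖p‖ ^ 2 + θ * ‖q‖ ^ 2 - θ * (1 - θ) * ‖p - q‖ ^ 2 := by
  have h : ∀ x : E, ‖x‖ ^ 2 = ⟪x, x⟫ := fun x => (real_inner_self_eq_norm_sq x).symm
  simp only [h, inner_add_left, inner_add_right, inner_sub_left, inner_sub_right,
    real_inner_smul_left, real_inner_smul_right]
  rw [real_inner_comm q p]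
  ring

lemma key_det {C : Set E} (hCconv : Convex ℝ C)
    {x₀ : E} (hx₀ : x₀ ∈ C) {f : E → ℝ} (hf : ConvexOn ℝ Set.univ f)
    {τ : ℝ} (hτ : 0 ≤ τ) (z : E) {xs : E} (hxs : xs ∈ C)
    (hmin : IsMinOn (fun x => τ * f x + (1 / 2) * ‖(x₀ + z) - x‖ ^ 2) C xs)
    {s t : E} (hs : s ∈ subdiff f x₀) (ht : t ∈ polarCone (tangentConeOf C x₀)) :
    ‖xs - x₀‖ ≤ ‖z - (τ • s + t)‖ := by
  set u := xs - x₀ with hu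
  set g : E → ℝ := fun x => τ * f x + (1 / 2) * ‖(x₀ + z) - x‖ ^ 2 with hg
  -- strong minimality
  have hstrong : g xs + (1 / 2) * ‖u‖ ^ 2 ≤ g x₀ := by
    refine le_of_forall_pos_lt_add fun ε hε => ?_
    set θ : ℝ := min (1/2) (ε / (‖u‖ ^ 2 + 1)) with hθdef
    have hQpos : (0:ℝ) < ‖u‖ ^ 2 + 1 := by positivity
    have hθpos : 0 < θ := lt_min (by norm_num) (by positivity)
    have hθlt : θ < 1 := lt_of_le_of_lt (min_le_left _ _) (by norm_num)
    have hθle : θ ≤ ε / (‖u‖ ^ 2 + 1) := min_le_right _ _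
    have hmem : (1 - θ) • xs + θ • x₀ ∈ C :=
      hCconv hxs hx₀ (by linarith) hθpos.le (by ring)
    have h1 : g xs ≤ g ((1 - θ) • xs + θ • x₀) := hmin hmem
    have h2 : g ((1 - θ) • xs + θ • x₀)
        ≤ (1 - θ) * g xs + θ * g x₀ - (1/2) * θ * (1 - θ) * ‖u‖ ^ 2 := by
      have hfpart : f ((1 - θ) • xs + θ • x₀) ≤ (1 - θ) * f xs + θ * f x₀ :=
        hf.2 (Set.mem_univ xs) (Set.mem_univ x₀) (by linarith) hθpos.le (by ring)
      have hquad : ‖(x₀ + z) - ((1 - θ) • xs + θ • x₀)‖ ^ 2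
          = (1 - θ) * ‖(x₀ + z) - xs‖ ^ 2 + θ * ‖(x₀ + z) - x₀‖ ^ 2
            - θ * (1 - θ) * ‖u‖ ^ 2 := by
        have hrw : (x₀ + z) - ((1 - θ) • xs + θ • x₀)
            = (1 - θ) • ((x₀ + z) - xs) + θ • ((x₀ + z) - x₀) := by
          module
        have hpq : ((x₀ + z) - xs) - ((x₀ + z) - x₀) = -u := by rw [hu]; abel
        rw [hrw, norm_combo, hpq, norm_neg]
      simp only [hg]
      rw [hquad]
      nlinarith [mul_le_mul_of_nonneg_left hfpart hτ]
    have hQb : (1/2) * θ * ‖u‖ ^ 2 < ε := by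
      have h3 : θ * (‖u‖ ^ 2 + 1) ≤ ε := by
        rw [← le_div_iff₀ hQpos] at *; exact hθle
      nlinarith
    have h3 := h1.trans h2
    have h4 : θ * (g xs + 1/2 * (1 - θ) * ‖u‖ ^ 2) ≤ θ * g x₀ := by nlinarith
    have h5 : g xs + 1/2 * (1 - θ) * ‖u‖ ^ 2 ≤ g x₀ := le_of_mul_le_mul_left h4 hθpos
    nlinarith [h5, hQb]
  -- subgradient inequality
  have hsg : f x₀ + ⟪s, u⟫ ≤ f xs := hs xs
  -- u is in the tangent cone
  have hu_tan : u ∈ tangentConeOf C x₀ := by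
    refine subset_closure ⟨1, zero_le_one, u, ?_, (one_smul ℝ u).symm⟩
    show x₀ + u ∈ C
    simpa [hu] using hxs
  have htu : ⟪t, u⟫ ≤ 0 := ht u hu_tan
  -- rewrite g values
  have hga : (x₀ + z) - xs = z - u := by rw [hu]; abel
  have hgb : (x₀ + z) - x₀ = z := by abel
  have hzu : ‖z - u‖ ^ 2 = ‖z‖ ^ 2 - 2 * ⟪z, u⟫ + ‖u‖ ^ 2 := by
    rw [norm_sub_sq_real]
  have hmain : ‖u‖ ^ 2 ≤ ⟪z - (τ • s + t), u⟫ := by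
    have e1 : g xs = τ * f xs + (1/2) * ‖z - u‖ ^ 2 := by simp only [hg, hga]
    have e2 : g x₀ = τ * f x₀ + (1/2) * ‖z‖ ^ 2 := by simp only [hg, hgb]
    have e3 : ⟪z - (τ • s + t), u⟫ = ⟪z, u⟫ - τ * ⟪s, u⟫ - ⟪t, u⟫ := by
      rw [inner_sub_left, inner_add_left, inner_smul_left]
      simp [RCLike.ofReal_real_eq_id]
      ring
    rw [e3]
    have := mul_le_mul_of_nonneg_left hsg hτ
    rw [e1, e2] at hstrong
    nlinarith
  have hcs : ⟪z - (τ • s + t), u⟫ ≤ ‖z - (τ • s + t)‖ * ‖u‖ := real_inner_le_norm _ _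
  nlinarith [norm_nonneg u, norm_nonneg (z - (τ • s + t))]

lemma subdiff_nonempty [CompleteSpace E] [FiniteDimensional ℝ E]
    {f : E → ℝ} (hf : ConvexOn ℝ Set.univ f) (x₀ : E) :
    (subdiff f x₀).Nonempty := by
  have hfc : Continuous f := by
    have h := hf.continuousOn isOpen_univ
    rw [continuousOn_iff_continuous_restrict] at h
    exact continuousOn_univ.mp (hf.continuousOn isOpen_univ)
  set S : Set (E × ℝ) := {p | f p.1 < p.2} with hS
  have hconv : Convex ℝ S := by
    intro p hp q hq a b ha hb hab
    simp only [hS, Set.mem_setOf_eq] at hp hq ⊢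
    have hmix : f (a • p.1 + b • q.1) ≤ a * f p.1 + b * f q.1 :=
      hf.2 (Set.mem_univ p.1) (Set.mem_univ q.1) ha hb hab
    have hfst : (a • p + b • q).1 = a • p.1 + b • q.1 := rfl
    have hsnd : (a • p + b • q).2 = a * p.2 + b * q.2 := rfl
    rw [hfst, hsnd]
    rcases lt_or_eq_of_le ha with ha' | ha'
    · have h1 : a * f p.1 < a * p.2 := by exact mul_lt_mul_of_pos_left hp ha'
      have h2 : b * f q.1 ≤ b * q.2 := mul_le_mul_of_nonneg_left hq.le hb
      linarith
    · have hb1 : b = 1 := by linarith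
      have ha0 : a = 0 := ha'.symm
      calc f (a • p.1 + b • q.1) ≤ a * f p.1 + b * f q.1 := hmix
      _ < a * p.2 + b * q.2 := by rw [ha0, hb1]; simpa using hq
  have hopen : IsOpen S := isOpen_lt (hfc.comp continuous_fst) continuous_snd
  have hxnot : (x₀, f x₀) ∉ S := by simp [hS]
  obtain ⟨φ, hφ⟩ := geometric_hahn_banach_open_point hconv hopen hxnot
  set β : ℝ := φ (0, 1) with hβdef
  have hdecomp : ∀ (a : E) (b : ℝ), φ (a, b) = φ (a, 0) + b * β := by
    intro a b
    have h1 : (a, b) = (a, (0:ℝ)) + b • ((0:E), (1:ℝ)) := by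
      simp [Prod.ext_iff]
    rw [h1, map_add, φ.map_smul]
    simp [hβdef, smul_eq_mul]
  have hβ : β < 0 := by
    have h := hφ (x₀, f x₀ + 1) (by simp [hS])
    rw [hdecomp x₀ (f x₀ + 1), hdecomp x₀ (f x₀)] at h
    linarith
  have hβne : β ≠ 0 := hβ.ne
  have hβinv : β⁻¹ < 0 := inv_lt_zero.mpr hβ
  have key : ∀ x : E, φ (x, 0) + f x * β ≤ φ (x₀, 0) + f x₀ * β := by
    intro x
    refine le_of_forall_pos_lt_add fun ε hε => ?_
    have hε' : 0 < ε / (-β) := div_pos hε (neg_pos.mpr hβ)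
    have h := hφ (x, f x + ε / (-β)) (by simp only [hS, Set.mem_setOf_eq]; linarith)
    rw [hdecomp x _, hdecomp x₀ _] at h
    have h2 : ε / (-β) * β = -ε := by
      rw [div_mul_eq_mul_div, mul_comm ε β, mul_div_assoc, div_neg]
      field_simp
    have hexp : (f x + ε / (-β)) * β = f x * β - ε := by
      rw [add_mul, h2]
      ring
    rw [hexp] at h
    linarith
  refine ⟨(InnerProductSpace.toDual ℝ E).symm
    ((-β⁻¹) • (φ.comp (ContinuousLinearMap.inl ℝ E ℝ))), fun x => ?_⟩
  have hinner : ⟪(InnerProductSpace.toDual ℝ E).symm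
      ((-β⁻¹) • (φ.comp (ContinuousLinearMap.inl ℝ E ℝ))), x - x₀⟫
      = (-β⁻¹) * φ (x - x₀, 0) := by
    rw [InnerProductSpace.toDual_symm_apply]
    rfl
  rw [hinner]
  have hlin : φ (x - x₀, 0) = φ (x, 0) - φ (x₀, 0) := by
    have : ((x - x₀ : E), (0:ℝ)) = (x, (0:ℝ)) - (x₀, (0:ℝ)) := by simp [Prod.ext_iff]
    rw [this, map_sub]
  have hA : φ (x - x₀, 0) + (f x - f x₀) * β ≤ 0 := by
    rw [hlin]; have := key x; linarith
  have h0 : 0 ≤ β⁻¹ * (φ (x - x₀, 0) + (f x - f x₀) * β) := by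
    have := mul_nonneg (neg_nonneg.mpr hβinv.le) (neg_nonneg.mpr hA)
    nlinarith [this]
  have h2 : β⁻¹ * (φ (x - x₀, 0) + (f x - f x₀) * β)
      = β⁻¹ * φ (x - x₀, 0) + (f x - f x₀) := by
    field_simp
  rw [h2] at h0
  linarith

instance stdGaussian_prob (n : ℕ) : IsProbabilityMeasure (stdGaussian n) := by
  unfold _root_.stdGaussian
  exact Measure.isProbabilityMeasure_map
    ((EuclideanSpace.equiv (Fin n) ℝ).symm.continuous.measurable.aemeasurable)

lemma integrable_sq_gaussian : Integrable (fun x : ℝ => x ^ 2) (gaussianReal 0 1) := by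
  rw [gaussianReal_of_var_ne_zero 0 one_ne_zero]
  rw [integrable_withDensity_iff (measurable_gaussianPDF 0 1)
    (Filter.Eventually.of_forall (fun x => ENNReal.ofReal_lt_top))]
  have heq : ∀ x : ℝ, x ^ 2 * (gaussianPDF 0 1 x).toReal
      = (√(2 * π))⁻¹ * (x ^ 2 * rexp (-(2:ℝ)⁻¹ * x ^ 2)) := by
    intro x
    rw [gaussianPDF, ENNReal.toReal_ofReal (gaussianPDFReal_nonneg 0 1 x), gaussianPDFReal]
    push_cast
    rw [mul_one]
    ring_nf
  simp only [heq]
  have hint : Integrable (fun x : ℝ => x ^ 2 * rexp (-2⁻¹ * x ^ 2)) := by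
    have h := integrable_rpow_mul_exp_neg_mul_sq (by norm_num : (0:ℝ) < 2⁻¹)
      (by norm_num : (-1:ℝ) < 2)
    have h2 : ∀ x : ℝ, x ^ (2:ℝ) = x ^ (2:ℕ) := fun x => by
      rw [show (2:ℝ) = ((2:ℕ):ℝ) by norm_num, Real.rpow_natCast]
    simpa only [h2] using h
  exact hint.const_mul _

lemma pi_map_eval_gaussian {n : ℕ} (i : Fin n) :
    Measure.map (fun x : Fin n → ℝ => x i) (Measure.pi fun _ : Fin n => gaussianReal 0 1)
      = gaussianReal 0 1 := by
  ext s hs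
  rw [Measure.map_apply (measurable_pi_apply i) hs, Set.eval_preimage, Measure.pi_pi]
  rw [Finset.prod_eq_single i]
  · simp
  · intro j _ hj
    simp [Function.update_of_ne hj]
  · simp

lemma integrable_eval_sq {n : ℕ} (i : Fin n) :
    Integrable (fun x : Fin n → ℝ => x i ^ 2) (Measure.pi fun _ : Fin n => gaussianReal 0 1) := by
  have hmap := pi_map_eval_gaussian i
  have h : Integrable ((fun y : ℝ => y ^ 2) ∘ (fun x : Fin n → ℝ => x i))
      (Measure.pi fun _ : Fin n => gaussianReal 0 1) := by
    apply (integrable_map_measure ?_ (measurable_pi_apply i).aemeasurable).mp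
    · rw [hmap]; exact integrable_sq_gaussian
    · rw [hmap]; exact (measurable_id.pow_const 2).aestronglyMeasurable
  exact h

lemma integrable_norm_sq_stdGaussian {n : ℕ} :
    Integrable (fun w : EuclideanSpace ℝ (Fin n) => ‖w‖ ^ 2) (stdGaussian n) := by
  unfold _root_.stdGaussian
  rw [integrable_map_measure (g := fun w : EuclideanSpace ℝ (Fin n) => ‖w‖ ^ 2) (continuous_norm.pow 2).aestronglyMeasurable
    (EuclideanSpace.equiv (Fin n) ℝ).symm.continuous.measurable.aemeasurable]
  have heq : (fun w : EuclideanSpace ℝ (Fin n) => ‖w‖ ^ 2)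
      ∘ (⇑(EuclideanSpace.equiv (Fin n) ℝ).symm)
      = fun x : Fin n → ℝ => ∑ i, x i ^ 2 := by
    funext x
    simp only [Function.comp_apply]
    rw [EuclideanSpace.norm_eq, Real.sq_sqrt (by positivity)]
    congr 1
    funext i
    rw [Real.norm_eq_abs, sq_abs]
    rfl
  rw [heq]
  exact MeasureTheory.integrable_finset_sum _ (fun i _ => integrable_eval_sq i)

lemma integrable_infDist_sq {n : ℕ} {K : Set (EuclideanSpace ℝ (Fin n))} (hK : K.Nonempty) :
    Integrable (fun w : EuclideanSpace ℝ (Fin n) => (Metric.infDist w K) ^ 2)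
      (stdGaussian n) := by
  obtain ⟨k₀, hk₀⟩ := hK
  have hbound : Integrable (fun w : EuclideanSpace ℝ (Fin n) => 2 * ‖w‖ ^ 2 + 2 * ‖k₀‖ ^ 2)
      (stdGaussian n) :=
    (integrable_norm_sq_stdGaussian.const_mul 2).add (integrable_const _)
  refine hbound.mono' ((Metric.continuous_infDist_pt K).pow 2).aestronglyMeasurable ?_
  refine Filter.Eventually.of_forall fun w => ?_
  have h1 : Metric.infDist w K ≤ ‖w‖ + ‖k₀‖ := by
    calc Metric.infDist w K ≤ dist w k₀ := Metric.infDist_le_dist_of_mem hk₀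
    _ ≤ ‖w‖ + ‖k₀‖ := by rw [dist_eq_norm]; exact norm_sub_le _ _
  have h0 : 0 ≤ Metric.infDist w K := Metric.infDist_nonneg
  rw [Real.norm_eq_abs, abs_of_nonneg (by positivity)]
  nlinarith [norm_nonneg w, norm_nonneg k₀, sq_nonneg (‖w‖ - ‖k₀‖)]

end AuxLemmas

/-- MSE upper bounds for the constrained-and-regularized estimator.
With `z = σv`, `τ = σλ`: (i) for every `λ ≥ 0` the NMSE is at most
`D(λ∂f(x₀) + T_C(x₀)*)`; (ii) choosing `λ*` minimizing `D(λ∂f(x₀) + T_C(x₀)*)` and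
`τ = λ*σ` yields NMSE at most `min_{λ≥0} D(λ∂f(x₀) + T_C(x₀)*)`. -/
theorem statement18 {n : ℕ} (C : Set (EuclideanSpace ℝ (Fin n)))
    (hCne : C.Nonempty) (hCcl : IsClosed C) (hCconv : Convex ℝ C)
    (x₀ : EuclideanSpace ℝ (Fin n)) (hx₀ : x₀ ∈ C)
    (f : EuclideanSpace ℝ (Fin n) → ℝ) (hf : ConvexOn ℝ Set.univ f)
    (σ : ℝ) (hσ : 0 < σ)
    (xstar : ℝ → EuclideanSpace ℝ (Fin n) → EuclideanSpace ℝ (Fin n))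
    (hxstar : ∀ τ : ℝ, 0 ≤ τ → ∀ w, xstar τ w ∈ C ∧
      IsMinOn (fun x => τ * f x + (1 / 2) * ‖(x₀ + σ • w) - x‖ ^ 2) C (xstar τ w)) :
    (∀ lam : ℝ, 0 ≤ lam →
      (∫ w, ‖xstar (σ * lam) w - x₀‖ ^ 2 ∂(stdGaussian n)) / σ ^ 2 ≤
        msd n (lam • subdiff f x₀ + polarCone (tangentConeOf C x₀))) ∧
    (∀ lamstar : ℝ, 0 ≤ lamstar →
      (∀ lam : ℝ, 0 ≤ lam →
        msd n (lamstar • subdiff f x₀ + polarCone (tangentConeOf C x₀)) ≤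
          msd n (lam • subdiff f x₀ + polarCone (tangentConeOf C x₀))) →
      (∫ w, ‖xstar (lamstar * σ) w - x₀‖ ^ 2 ∂(stdGaussian n)) / σ ^ 2 ≤
        sInf {d : ℝ | ∃ lam : ℝ, 0 ≤ lam ∧
          d = msd n (lam • subdiff f x₀ + polarCone (tangentConeOf C x₀))}) := by
  obtain ⟨s₀, hs₀⟩ := subdiff_nonempty hf x₀
  have h0polar : (0 : EuclideanSpace ℝ (Fin n)) ∈ polarCone (tangentConeOf C x₀) :=
    fun x _ => by simp
  have key1 : ∀ lam : ℝ, 0 ≤ lam →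
      (∫ w, ‖xstar (σ * lam) w - x₀‖ ^ 2 ∂(stdGaussian n)) / σ ^ 2 ≤
        msd n (lam • subdiff f x₀ + polarCone (tangentConeOf C x₀)) := by
    intro lam hlam
    set K := lam • subdiff f x₀ + polarCone (tangentConeOf C x₀) with hK
    have hKne : K.Nonempty :=
      ⟨lam • s₀ + 0, Set.add_mem_add (Set.smul_mem_smul_set hs₀) h0polar⟩
    have hτ : 0 ≤ σ * lam := mul_nonneg hσ.le hlam
    have hpt : ∀ w, ‖xstar (σ * lam) w - x₀‖ ^ 2 ≤ σ ^ 2 * (Metric.infDist w K) ^ 2 := by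
      intro w
      obtain ⟨hmem, hmin⟩ := hxstar (σ * lam) hτ w
      have hall : ∀ k ∈ K, ‖xstar (σ * lam) w - x₀‖ ≤ σ * dist w k := by
        intro k hk
        obtain ⟨a, ha, t, ht, rfl⟩ := Set.mem_add.1 hk
        obtain ⟨s, hs, rfl⟩ := ha
        have ht' : σ • t ∈ polarCone (tangentConeOf C x₀) := by
          intro x hx
          rw [real_inner_smul_left]
          exact mul_nonpos_iff.mpr (Or.inl ⟨hσ.le, ht x hx⟩)
        have hkey := key_det hCconv hx₀ hf hτ (σ • w) hmem hmin hs ht'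
        have hrw : (σ * lam) • s + σ • t = σ • (lam • s + t) := by module
        rw [hrw] at hkey
        calc ‖xstar (σ * lam) w - x₀‖ ≤ ‖σ • w - σ • (lam • s + t)‖ := hkey
        _ = σ * dist w (lam • s + t) := by
            rw [← smul_sub, norm_smul, Real.norm_eq_abs, abs_of_pos hσ, dist_eq_norm]
      have hinf : ‖xstar (σ * lam) w - x₀‖ / σ ≤ Metric.infDist w K := by
        by_contra hc
        push_neg at hc
        obtain ⟨k, hk, hdk⟩ := (Metric.infDist_lt_iff hKne).1 hc
        have h1 := hall k hk
        have h2 : σ * dist w k < σ * (‖xstar (σ * lam) w - x₀‖ / σ) :=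
          mul_lt_mul_of_pos_left hdk hσ
        rw [mul_div_cancel₀ _ hσ.ne'] at h2
        linarith
      have hle : ‖xstar (σ * lam) w - x₀‖ ≤ σ * Metric.infDist w K := by
        rw [div_le_iff₀ hσ] at hinf
        linarith [hinf]
      calc ‖xstar (σ * lam) w - x₀‖ ^ 2 ≤ (σ * Metric.infDist w K) ^ 2 :=
        pow_le_pow_left₀ (norm_nonneg _) hle 2
      _ = σ ^ 2 * (Metric.infDist w K) ^ 2 := by ring
    have hint : Integrable (fun w => σ ^ 2 * (Metric.infDist w K) ^ 2) (stdGaussian n) :=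
      (integrable_infDist_sq hKne).const_mul _
    have hmono : (∫ w, ‖xstar (σ * lam) w - x₀‖ ^ 2 ∂(stdGaussian n))
        ≤ ∫ w, σ ^ 2 * (Metric.infDist w K) ^ 2 ∂(stdGaussian n) :=
      integral_mono_of_nonneg (Filter.Eventually.of_forall fun w => by positivity) hint
        (Filter.Eventually.of_forall hpt)
    rw [integral_const_mul] at hmono
    rw [div_le_iff₀ (by positivity : (0:ℝ) < σ ^ 2)]
    have hmsd : msd n K = ∫ w, (Metric.infDist w K) ^ 2 ∂(stdGaussian n) := rfl
    rw [hmsd]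
    linarith [hmono]
  refine ⟨key1, fun lamstar hls hminim => ?_⟩
  rw [mul_comm lamstar σ]
  refine (key1 lamstar hls).trans (le_csInf ⟨_, 0, le_refl (0:ℝ), rfl⟩ ?_)
  rintro b ⟨lam, hlam, rfl⟩
  exact hminim lam hlam
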